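/- The function G(x) = x^φ on [0,1], where φ = (1+√5)/2, satisfies the fixed point property of the Lorenz operator: (∫₀ˣ G⁻¹(u) du)/(∫₀¹ G⁻¹(u) du) = G(x) for all x ∈ [0,1], where G⁻¹(u) = u^{1/φ}. -/

import Mathlib

theorem power_law_fixed_point_of_lorenz :
    let φ : ℝ := (1 + Real.sqrt 5) / 2
    ∀ x ∈ Set.Icc (0:ℝ) 1,
      (∫ u in (0:ℝ)..x, u ^ (1 / φ)) / (∫ u in (0:ℝ)..1, u ^ (1 / φ)) =
        x ^ φ := by
  intro φ x hx
  have hs : Real.sqrt 5 ^ 2 = 5 := Real.sq_sqrt (by norm_num)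
  have hs0 : (1:ℝ) ≤ Real.sqrt 5 := by
    nlinarith [Real.sqrt_nonneg 5]
  have hφ : (0:ℝ) < φ := by unfold φ; linarith
  have hkey : 1 / φ + 1 = φ := by
    field_simp
    unfold φ
    nlinarith
  have h1 : (-1 : ℝ) < 1 / φ := by have := div_pos one_pos hφ; linarith
  rw [integral_rpow (Or.inl h1), integral_rpow (Or.inl h1), hkey]
  rw [Real.one_rpow]
  have hφ0 : φ ≠ 0 := ne_of_gt hφ
  field_simp
  rw [Real.zero_rpow hφ0]; ring
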